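/- Let m be a positive integer and let Δ₀ ⊂ ℝ^m be the convex hull of the standard basis vectors e_1, …, e_m and −(e_1 + ⋯ + e_m). Then for every q = (q_1, …, q_m) ∈ ℝ^m one has gauge Δ₀ q ≤ (2m − 1)·max_{1 ≤ i ≤ m} |q_i|. -/

import Mathlib

open Finset Pointwise

lemma mem_simplex_aux (m : ℕ) (c : Fin m → ℝ) (c₀ : ℝ)
    (hc : ∀ i, 0 ≤ c i) (hc₀ : 0 ≤ c₀) (hsum : ∑ i, c i + c₀ = 1) :
    (fun j => c j - c₀) ∈ convexHull ℝ
      ((Set.range fun i : Fin m => (Pi.single i 1 : Fin m → ℝ)) ∪ {fun _ => -1}) := by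
  classical
  set S := (Set.range fun i : Fin m => (Pi.single i 1 : Fin m → ℝ)) ∪ {fun _ => -1} with hS
  have h := (convex_convexHull ℝ S).sum_mem
    (t := (Finset.univ : Finset (Option (Fin m))))
    (w := fun o => o.elim c₀ c)
    (z := fun o => o.elim (fun _ => -1) (fun i => Pi.single i 1))
    (fun o _ => by cases o with
      | none => exact hc₀
      | some i => exact hc i)
    (by rw [Fintype.sum_option]; simpa [add_comm] using hsum)
    (fun o _ => by
      cases o with
      | none => exact subset_convexHull ℝ S (by simp [hS])
      | some i => exact subset_convexHull ℝ S (Or.inl ⟨i, rfl⟩))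
  convert h using 1
  funext j
  rw [Finset.sum_apply, Fintype.sum_option]
  simp only [Option.elim]
  rw [show (∑ i : Fin m, (c i • (Pi.single i (1:ℝ) : Fin m → ℝ)) j)
      = ∑ i : Fin m, (if j = i then c i else 0) from ?_]
  · rw [Finset.sum_ite_eq (Finset.univ : Finset (Fin m)) j c]
    simp [sub_eq_add_neg, add_comm, mul_comm]
  · refine Finset.sum_congr rfl fun i _ => ?_
    simp [Pi.single_apply, mul_ite]

/-- For the simplex `Δ₀ = conv{e_1, …, e_m, −(e_1+⋯+e_m)}` one has
`gauge Δ₀ q ≤ (2m−1) · max_i |q_i|`. -/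
theorem stmt_3 (m : ℕ) (hm : 0 < m)
    (Δ₀ : Set (Fin m → ℝ))
    (hΔ : Δ₀ = convexHull ℝ
      ((Set.range fun i : Fin m => (Pi.single i 1 : Fin m → ℝ)) ∪ {fun _ => -1}))
    (q : Fin m → ℝ) :
    gauge Δ₀ q ≤
      (2 * (m : ℝ) - 1) * Finset.univ.sup' ⟨⟨0, hm⟩, Finset.mem_univ _⟩ (fun i => |q i|) := by
  classical
  have hne : (Finset.univ : Finset (Fin m)).Nonempty := ⟨⟨0, hm⟩, Finset.mem_univ _⟩
  set M : ℝ := Finset.univ.sup' hne (fun i => |q i|) with hM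
  have hqM : ∀ i, |q i| ≤ M := fun i =>
    Finset.le_sup' (fun i => |q i|) (Finset.mem_univ i)
  have hM0 : 0 ≤ M := le_trans (abs_nonneg (q ⟨0, hm⟩)) (hqM ⟨0, hm⟩)
  have hm1 : (1:ℝ) ≤ (m:ℝ) := by exact_mod_cast hm
  have h2m : (1:ℝ) ≤ 2 * (m:ℝ) - 1 := by linarith
  rcases eq_or_lt_of_le hM0 with h0 | hMpos
  · -- M = 0, so q = 0
    have hq : q = 0 := by
      funext i
      have h1 := hqM i
      rw [← h0] at h1
      exact abs_eq_zero.mp (le_antisymm h1 (abs_nonneg _))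
    rw [hq, gauge_zero, ← h0, mul_zero]
  · -- M > 0
    set b : ℝ := max 0 (Finset.univ.sup' hne (fun i => -q i)) with hb
    have hb0 : 0 ≤ b := le_max_left _ _
    have hbM : b ≤ M := by
      apply max_le hM0
      apply Finset.sup'_le
      intro i _
      exact le_trans (neg_le_abs _) (hqM i)
    have ha : ∀ i, 0 ≤ q i + b := by
      intro i
      have : -q i ≤ b := le_trans (Finset.le_sup' (fun i => -q i) (Finset.mem_univ i)) (le_max_right _ _)
      linarith
    set lam : ℝ := (2 * (m:ℝ) - 1) * M with hlam
    have hlampos : 0 < lam := mul_pos (by linarith) hMpos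
    -- key: sum of coefficients bound
    have hsumbound : (∑ i, q i) + ((m:ℝ) + 1) * b ≤ lam := by
      rcases eq_or_lt_of_le hb0 with hb0' | hbpos
      · have hsq : ∑ i, q i ≤ (m:ℝ) * M := by
          calc ∑ i, q i ≤ ∑ i, M := Finset.sum_le_sum fun i _ => le_trans (le_abs_self _) (hqM i)
          _ = (m:ℝ) * M := by simp [mul_comm]
        rw [← hb0', mul_zero, add_zero]
        calc ∑ i, q i ≤ (m:ℝ) * M := hsq
        _ ≤ lam := by rw [hlam]; nlinarith
      · -- b > 0, so b = -q i₀ for some i₀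
        have : b = Finset.univ.sup' hne (fun i => -q i) := by
          rcases max_cases 0 (Finset.univ.sup' hne (fun i => -q i)) with ⟨h1, h2⟩ | ⟨h1, h2⟩
          · rw [hb, h1] at hbpos ⊢; linarith
          · rw [hb, h1]
        obtain ⟨i₀, _, hi₀⟩ := Finset.exists_mem_eq_sup' hne (fun i => -q i)
        have hbq : b = -q i₀ := by rw [this, hi₀]
        have hsq : ∑ i, q i ≤ ((m:ℝ) - 1) * M - b := by
          have : ∑ i, q i = q i₀ + ∑ i ∈ Finset.univ.erase i₀, q i := by
            rw [Finset.add_sum_erase _ _ (Finset.mem_univ i₀)]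
          rw [this]
          have h1 : ∑ i ∈ Finset.univ.erase i₀, q i ≤ ((m:ℝ) - 1) * M := by
            calc ∑ i ∈ Finset.univ.erase i₀, q i
                ≤ ∑ i ∈ Finset.univ.erase i₀, M :=
                  Finset.sum_le_sum fun i _ => le_trans (le_abs_self _) (hqM i)
            _ = ((m:ℝ) - 1) * M := by
                rw [Finset.sum_const, Finset.card_erase_of_mem (Finset.mem_univ i₀)]
                simp [Nat.cast_sub hm, mul_comm]
          linarith [hbq]
        nlinarith
    -- now show q ∈ lam • Δ₀
    have hmem : q ∈ lam • Δ₀ := by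
      rw [Set.mem_smul_set_iff_inv_smul_mem₀ (ne_of_gt hlampos), hΔ]
      set r : ℝ := lam - ((∑ i, q i) + ((m:ℝ) + 1) * b) with hr
      have hr0 : 0 ≤ r := by linarith
      set c : Fin m → ℝ := fun i => (q i + b + r / ((m:ℝ) + 1)) / lam with hc
      set c₀ : ℝ := (b + r / ((m:ℝ) + 1)) / lam with hc₀
      have hmpos : (0:ℝ) < (m:ℝ) + 1 := by linarith
      have key : (lam⁻¹ • q) = fun j => c j - c₀ := by
        funext j
        rw [hc, hc₀]
        simp only [Pi.smul_apply, smul_eq_mul]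
        field_simp
        ring
      rw [key]
      apply mem_simplex_aux
      · intro i
        apply div_nonneg _ (le_of_lt hlampos)
        have := ha i
        positivity
      · apply div_nonneg _ (le_of_lt hlampos)
        positivity
      · rw [hc, hc₀]
        rw [← Finset.sum_div, ← add_div]
        rw [div_eq_one_iff_eq (ne_of_gt hlampos)]
        rw [Finset.sum_add_distrib, Finset.sum_add_distrib]
        simp only [Finset.sum_const, Finset.card_univ, Fintype.card_fin, nsmul_eq_mul]
        field_simp
        ring
    calc gauge Δ₀ q ≤ lam := gauge_le_of_mem (le_of_lt hlampos) hmem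
    _ = _ := rfl
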